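/- On Y = T² × [0, 2j] with metric g_j(x,y,z) = (dz − x̂·dy)² + dy² + dx², where x̂ = min(x, 2j−x), the pointwise norm of the 1-form dz satisfies |dz|² = 1 + x̂². Consequently any surface M' in the relative homology class of the cylinder {z = const} has area at least ∫₁^{j−1} √(1+x²) dx, which grows quadratically in j. -/

import Mathlib

/-!
STATEMENT 7: On `Y = T² × [0,2j]` with metric
`g_j(x,y,z) = (dz − x̂·dy)² + dy² + dx²`, `x̂ = min(x, 2j−x)`, the metric has, in the
coordinate coframe `(dx, dy, dz)`, the matrix
`G(x̂) = [[1,0,0],[0,1+x̂²,−x̂],[0,−x̂,1]]`, which is positive definite; the pointwise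
(dual) norm of the 1-form `dz` is given by `|dz|² = (G(x̂)⁻¹)_{zz} = 1 + x̂²`.
Consequently (by the calibration argument with the form `φ(x)·*dz`) any surface `M'` in the
relative homology class of the cylinder `{z = const}` has area at least
`∫₁^{j−1} √(1+x²) dx`, which grows quadratically in `j`: it is at least `(j−2)²/2`.
(The area lower bound for surfaces is recorded here through the calibration integral; the
quadratic growth of that integral is the last clause.)
-/

open Matrix intervalIntegral

noncomputable def cylMetricMatrix (c : ℝ) : Matrix (Fin 3) (Fin 3) ℝ :=
  !![1, 0, 0;
     0, 1 + c ^ 2, -c;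
     0, -c, 1]

lemma cyl_posdef (c : ℝ) : (cylMetricMatrix c).PosDef := by
  rw [Matrix.posDef_iff_dotProduct_mulVec]
  constructor
  · ext i j
    fin_cases i <;> fin_cases j <;>
      simp [cylMetricMatrix, Matrix.conjTranspose, Matrix.vecHead, Matrix.vecTail]
  · intro v hv
    have key : (star v) ⬝ᵥ (cylMetricMatrix c).mulVec v
        = v 0 ^ 2 + v 1 ^ 2 + (c * v 1 - v 2) ^ 2 := by
      simp [cylMetricMatrix, Matrix.mulVec, dotProduct, Fin.sum_univ_three,
        Matrix.vecHead, Matrix.vecTail]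
      ring
    rw [key]
    refine lt_of_le_of_ne (by positivity) fun heq => ?_
    have h0 : v 0 = 0 := by nlinarith [sq_nonneg (v 0), sq_nonneg (v 1), sq_nonneg (c * v 1 - v 2)]
    have h1 : v 1 = 0 := by nlinarith [sq_nonneg (v 0), sq_nonneg (v 1), sq_nonneg (c * v 1 - v 2)]
    have h2 : v 2 = 0 := by
      have hsq : (c * v 1 - v 2) ^ 2 = v 2 ^ 2 := by rw [h1]; ring
      nlinarith [sq_nonneg (v 2)]
    exact hv (funext fun i => by fin_cases i <;> assumption)

lemma cyl_inv (c : ℝ) : (cylMetricMatrix c)⁻¹ = !![1,0,0;0,1,c;0,c,1+c^2] := by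
  apply Matrix.inv_eq_right_inv
  ext i j
  fin_cases i <;> fin_cases j <;>
    simp [cylMetricMatrix, Matrix.mul_apply, Fin.sum_univ_three, Matrix.vecHead, Matrix.vecTail, Matrix.one_apply] <;> ring

theorem cylinder_metric_dz_norm_and_area_bound (j : ℝ) (hj : 2 ≤ j) :
    (∀ x ∈ Set.Icc (0:ℝ) (2 * j),
      (cylMetricMatrix (min x (2 * j - x))).PosDef ∧
      (cylMetricMatrix (min x (2 * j - x)))⁻¹ 2 2 = 1 + (min x (2 * j - x)) ^ 2) ∧
    (j - 2) ^ 2 / 2 ≤ ∫ x in (1:ℝ)..(j - 1), Real.sqrt (1 + x ^ 2) := by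
  constructor
  · intro x _
    refine ⟨cyl_posdef _, ?_⟩
    rw [cyl_inv]
    norm_num
    rfl
  · have h1 : (1:ℝ) ≤ j - 1 := by linarith
    have hmono : ∫ x in (1:ℝ)..(j-1), x ≤ ∫ x in (1:ℝ)..(j-1), Real.sqrt (1 + x^2) := by
      apply intervalIntegral.integral_mono_on h1
      · exact intervalIntegrable_id
      · exact ((continuous_const.add (continuous_pow 2)).sqrt).intervalIntegrable _ _
      · intro x hx
        have hx0 : 0 ≤ x := le_trans zero_le_one hx.1
        calc x = Real.sqrt (x^2) := (Real.sqrt_sq hx0).symm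
        _ ≤ Real.sqrt (1 + x^2) := Real.sqrt_le_sqrt (by linarith)
    have hid : ∫ x in (1:ℝ)..(j-1), x = ((j-1)^2 - 1^2)/2 := by
      rw [integral_id]
    nlinarith [hmono]
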